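/- Let w be an ultimately recurrent infinite partial word. Then there exists a constant C such that r_w(n) ≤ p_w(n) ≤ C · r_w(n) for all sufficiently large n; that is, p_w(n) = Θ(r_w(n)). -/

import Mathlib

open Set

variable {A : Type*}

/-- The full word `u` occurs at position `i` in the partial word `w`
(`none` is the hole symbol, compatible with every letter). -/
def Occurs (w : ℕ → Option A) (u : List A) (i : ℕ) : Prop :=
  ∀ j : Fin u.length, w (i + (j : ℕ)) = none ∨ w (i + (j : ℕ)) = some (u.get j)

/-- `u` is a subword of `w`: it occurs at some position. -/
def IsSubword (w : ℕ → Option A) (u : List A) : Prop :=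
  ∃ i, Occurs w u i

/-- `u` is a recurrent subword of `w`: it occurs at infinitely many positions. -/
def IsRecSubword (w : ℕ → Option A) (u : List A) : Prop :=
  {i | Occurs w u i}.Infinite

/-- Subword complexity: number of distinct full words of length `n`
that are subwords of `w`. -/
noncomputable def pcomp (w : ℕ → Option A) (n : ℕ) : ℕ :=
  {u : List A | u.length = n ∧ IsSubword w u}.ncard

/-- Number of recurrent subwords of length `n`. -/
noncomputable def rcomp (w : ℕ → Option A) (n : ℕ) : ℕ :=
  {u : List A | u.length = n ∧ IsRecSubword w u}.ncard

/-- `w` is recurrent: every subword occurs infinitely often. -/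
def Recurrent (w : ℕ → Option A) : Prop :=
  ∀ u : List A, IsSubword w u → IsRecSubword w u

/-- `w` is ultimately recurrent: some shift of `w` is recurrent. -/
def UltimatelyRecurrent (w : ℕ → Option A) : Prop :=
  ∃ p, Recurrent (fun i => w (i + p))

/-- `c` is a completion of `w`: it agrees with `w` at every non-hole position. -/
def IsCompletion (w : ℕ → Option A) (c : ℕ → A) : Prop :=
  ∀ i, ∀ a : A, w i = some a → c i = a

/-- `w` is uniformly recurrent: for every subword `u` there is a window size `m`
such that every factor of `w` of length `m` contains an occurrence of `u`. -/
def UniformlyRecurrent (w : ℕ → Option A) : Prop :=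
  ∀ u : List A, IsSubword w u →
    ∃ m, ∀ i, ∃ j, i ≤ j ∧ j + u.length ≤ i + m ∧ Occurs w u j

/-- Every factor of `w` of length `m` contains every length-`n` subword of `w`. -/
def GoodWindow (w : ℕ → Option A) (n m : ℕ) : Prop :=
  ∀ u : List A, u.length = n → IsSubword w u →
    ∀ i, ∃ j, i ≤ j ∧ j + n ≤ i + m ∧ Occurs w u j

/-- The recurrence function `R_w(n)`: the least window size `m` such that every
factor of length `m` contains every subword of length `n`. -/
noncomputable def Rfun (w : ℕ → Option A) (n : ℕ) : ℕ :=
  sInf {m | GoodWindow w n m}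

/-- `w` is ultimately periodic: from some position on, `w` is compatible with a
periodic sequence of letters. -/
def UltimatelyPeriodic (w : ℕ → Option A) : Prop :=
  ∃ N p, 0 < p ∧ ∃ a : ℕ → A, ∀ i, N ≤ i → w i = none ∨ w i = some (a (i % p))

lemma occurs_drop (w : ℕ → Option A) {u : List A} {i : ℕ} (h : Occurs w u i) (k : ℕ) :
    Occurs w (u.drop k) (i + k) := by
  intro j
  have hj : k + (j : ℕ) < u.length := by
    have := j.2; simp only [List.length_drop] at this; omega
  have hget : (u.drop k).get j = u.get ⟨k + j, hj⟩ := by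
    simp [List.get_eq_getElem, List.getElem_drop]
  rw [hget]
  have := h ⟨k + j, hj⟩
  simpa [show i + k + (j : ℕ) = i + (k + (j : ℕ)) from by omega] using this

lemma rec_of_occurs_ge {w : ℕ → Option A} {p : ℕ} (hr : Recurrent fun i => w (i + p))
    {u : List A} {i : ℕ} (hocc : Occurs w u i) (hip : p ≤ i) : IsRecSubword w u := by
  have h1 : Occurs (fun k => w (k + p)) u (i - p) := by
    intro j
    have := hocc j
    simpa [show i - p + (j : ℕ) + p = i + (j : ℕ) from by omega] using this
  have h2 : IsRecSubword (fun k => w (k + p)) u := hr u ⟨_, h1⟩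
  have hsub : (fun k => k + p) '' {i | Occurs (fun k => w (k + p)) u i} ⊆ {i | Occurs w u i} := by
    rintro _ ⟨k, hk, rfl⟩
    intro j
    have := hk j
    simpa [show k + (j : ℕ) + p = k + p + (j : ℕ) from by omega] using this
  exact Set.Infinite.mono hsub (h2.image ((add_left_injective p).injOn))

lemma exists_rec_extension [Fintype A] (a0 : A) (w : ℕ → Option A) {v : List A} {m : ℕ}
    (hv : v.length = m) (hrec : IsRecSubword w v) {n : ℕ} (hmn : m ≤ n) :
    ∃ u : List A, u.length = n ∧ IsRecSubword w u ∧ u.take m = v := by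
  classical
  set f : ℕ → List A := fun i => List.ofFn
    (fun j : Fin n => if h : (j : ℕ) < m then v.get ⟨j, by omega⟩ else (w (i + j)).getD a0)
    with hf
  have hlen : ∀ i, (f i).length = n := fun i => List.length_ofFn
  have hocc : ∀ i, Occurs w v i → Occurs w (f i) i := by
    intro i hiv j
    have hj : (j : ℕ) < n := lt_of_lt_of_eq j.2 (hlen i)
    have hget : (f i).get j =
        if h : (j : ℕ) < m then v.get ⟨j, by omega⟩ else (w (i + j)).getD a0 := by
      simp [hf, List.get_eq_getElem, List.getElem_ofFn]
    rw [hget]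
    by_cases hjm : (j : ℕ) < m
    · rw [dif_pos hjm]
      exact hiv ⟨j, by omega⟩
    · rw [dif_neg hjm]
      cases hw : w (i + (j : ℕ)) with
      | none => exact Or.inl rfl
      | some a => exact Or.inr (by simp [hw])
  obtain ⟨u, hu⟩ : ∃ u : List A, ({i | Occurs w v i} ∩ f ⁻¹' {u}).Infinite := by
    by_contra hcon
    push_neg at hcon
    have hsub : {i | Occurs w v i} ⊆
        ⋃ u ∈ {l : List A | l.length = n}, ({i | Occurs w v i} ∩ f ⁻¹' {u}) := by
      intro i hi
      exact Set.mem_biUnion (hlen i) ⟨hi, rfl⟩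
    exact hrec (((List.finite_length_eq A n).biUnion fun u _ => hcon u).subset hsub)
  obtain ⟨i0, hi0⟩ := hu.nonempty
  have hueq : f i0 = u := hi0.2
  refine ⟨u, by rw [← hueq]; exact hlen i0, ?_, ?_⟩
  · apply hu.mono
    rintro i ⟨hiv, hif⟩
    have hfi : f i = u := hif
    exact hfi ▸ hocc i hiv
  · rw [← hueq]
    apply List.ext_get
    · simp [List.length_take, hlen i0, hv, Nat.min_eq_left hmn]
    · intro k h1 h2
      have hk : k < m := by rw [hv] at h2; exact h2
      have hkn : k < n := by omega
      simp [List.get_eq_getElem, List.getElem_take, hf, List.getElem_ofFn, dif_pos hk]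

lemma rcomp_aux [Fintype A] (a0 : A) (w : ℕ → Option A) {m n : ℕ} (hmn : m ≤ n) :
    {u : List A | u.length = m ∧ IsRecSubword w u}.ncard ≤
      {u : List A | u.length = n ∧ IsRecSubword w u}.ncard := by
  classical
  have key : ∀ v : List A, ∃ u : List A,
      (v.length = m ∧ IsRecSubword w v) → (u.length = n ∧ IsRecSubword w u ∧ u.take m = v) := by
    intro v
    by_cases hv : v.length = m ∧ IsRecSubword w v
    · obtain ⟨u, hu⟩ := exists_rec_extension a0 w hv.1 hv.2 hmn
      exact ⟨u, fun _ => hu⟩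
    · exact ⟨[], fun h => absurd h hv⟩
  choose F hF using key
  refine Set.ncard_le_ncard_of_injOn F (fun v hv => ⟨(hF v hv).1, (hF v hv).2.1⟩)
    (fun v1 hv1 v2 hv2 heq => ?_) ((List.finite_length_eq A n).subset fun u hu => hu.1)
  have e1 := (hF v1 hv1).2.2
  have e2 := (hF v2 hv2).2.2
  rw [← e1, ← e2, heq]

lemma my_ncard_prod {α β : Type*} (s : Set α) (t : Set β) :
    (s ×ˢ t).ncard = s.ncard * t.ncard := by
  rw [← Nat.card_coe_set_eq, ← Nat.card_coe_set_eq, ← Nat.card_coe_set_eq,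
    ← Nat.card_prod]
  exact Nat.card_congr (Equiv.Set.prod s t)

theorem stmt18 [Fintype A] (w : ℕ → Option A) (h : UltimatelyRecurrent w) :
    ∃ C N, ∀ n ≥ N, rcomp w n ≤ pcomp w n ∧ pcomp w n ≤ C * rcomp w n := by
  classical
  obtain ⟨p, hr⟩ := h
  by_cases hA : Nonempty A
  · obtain ⟨a0⟩ := hA
    refine ⟨1 + Nat.card (Fin p → A), p + 1, fun n hn => ?_⟩
    have hfn : {l : List A | l.length = n}.Finite := List.finite_length_eq A n
    have hPfin : {u : List A | u.length = n ∧ IsSubword w u}.Finite :=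
      hfn.subset fun u hu => hu.1
    have hRfin : {u : List A | u.length = n ∧ IsRecSubword w u}.Finite :=
      hfn.subset fun u hu => hu.1
    have hRP : {u : List A | u.length = n ∧ IsRecSubword w u} ⊆
        {u : List A | u.length = n ∧ IsSubword w u} := by
      rintro u ⟨h1, h2⟩
      exact ⟨h1, h2.nonempty⟩
    refine ⟨Set.ncard_le_ncard hRP hPfin, ?_⟩
    set B : Set (List A) := {u : List A | u.length = n ∧ ∃ i < p, Occurs w u i} with hB
    have hPsub : {u : List A | u.length = n ∧ IsSubword w u} ⊆
        {u : List A | u.length = n ∧ IsRecSubword w u} ∪ B := by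
      rintro u ⟨hlen, i, hocc⟩
      by_cases hip : p ≤ i
      · exact Or.inl ⟨hlen, rec_of_occurs_ge hr hocc hip⟩
      · exact Or.inr ⟨hlen, i, by omega, hocc⟩
    have h1 : pcomp w n ≤ rcomp w n + B.ncard := by
      refine le_trans (Set.ncard_le_ncard hPsub ?_) (Set.ncard_union_le _ _)
      exact (hRfin.union (hfn.subset fun u hu => hu.1))
    -- bound B
    have hBbound : B.ncard ≤ Nat.card (Fin p → A) *
        {y : List A | y.length = n - p ∧ IsRecSubword w y}.ncard := by
      have hmain : B.ncard ≤
          ((Set.univ : Set (Fin p → A)) ×ˢ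
            {y : List A | y.length = n - p ∧ IsRecSubword w y}).ncard := by
        refine Set.ncard_le_ncard_of_injOn
          (fun u => ((fun j : Fin p => u.getD j a0), u.drop p)) ?_ ?_ ?_
        · rintro u ⟨hlen, i, hip, hocc⟩
          refine ⟨Set.mem_univ _, by simp [List.length_drop, hlen], ?_⟩
          exact rec_of_occurs_ge hr (occurs_drop w hocc p) (by omega)
        · rintro u1 hu1 u2 hu2 heq
          have e1 : (fun j : Fin p => u1.getD j a0) = fun j : Fin p => u2.getD j a0 :=
            congrArg Prod.fst heq
          have e2 : u1.drop p = u2.drop p := congrArg Prod.snd heq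
          have ht : u1.take p = u2.take p := by
            apply List.ext_get
            · simp [List.length_take, hu1.1, hu2.1]
            · intro k hk1 hk2
              have hkp : k < p := by
                simp only [List.length_take] at hk1; omega
              have hk1' : k < u1.length := by rw [hu1.1]; omega
              have hk2' : k < u2.length := by rw [hu2.1]; omega
              have hthis := congrFun e1 ⟨k, hkp⟩
              simp only [List.getD_eq_getElem u1 a0 hk1', List.getD_eq_getElem u2 a0 hk2']
                at hthis
              simp [List.get_eq_getElem, List.getElem_take, hthis]
          calc u1 = u1.take p ++ u1.drop p := (List.take_append_drop p u1).symm
            _ = u2.take p ++ u2.drop p := by rw [ht, e2]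
            _ = u2 := List.take_append_drop p u2
        · exact Set.finite_univ.prod ((List.finite_length_eq A (n - p)).subset fun u hu => hu.1)
      calc B.ncard ≤ _ := hmain
        _ = Nat.card (Fin p → A) *
            {y : List A | y.length = n - p ∧ IsRecSubword w y}.ncard := by
          rw [my_ncard_prod, Set.ncard_univ]
    have hmono : {y : List A | y.length = n - p ∧ IsRecSubword w y}.ncard ≤ rcomp w n :=
      rcomp_aux a0 w (by omega)
    calc pcomp w n ≤ rcomp w n + B.ncard := h1
      _ ≤ rcomp w n + Nat.card (Fin p → A) * rcomp w n := by
        have := hBbound.trans (Nat.mul_le_mul_left _ hmono)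
        omega
      _ = (1 + Nat.card (Fin p → A)) * rcomp w n := by ring
  · refine ⟨1, 1, fun n hn => ?_⟩
    have hP : {u : List A | u.length = n ∧ IsSubword w u} = ∅ := by
      ext u
      simp only [Set.mem_setOf_eq, Set.mem_empty_iff_false, iff_false, not_and]
      intro hlen
      exfalso
      cases u with
      | nil => simp at hlen; omega
      | cons a _ => exact hA ⟨a⟩
    have hR : {u : List A | u.length = n ∧ IsRecSubword w u} = ∅ := by
      ext u
      simp only [Set.mem_setOf_eq, Set.mem_empty_iff_false, iff_false, not_and]
      intro hlen
      exfalso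
      cases u with
      | nil => simp at hlen; omega
      | cons a _ => exact hA ⟨a⟩
    constructor
    · simp [rcomp, pcomp, hP, hR]
    · simp [rcomp, pcomp, hP, hR]
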